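/- Let r > 0 and A₁, A₂ ∈ ℂ². Define f(u,v) = (A₁e^{rv} + A₂e^{-rv})e^{iu} + (A₁e^{rv} - A₂e^{-rv}). Then f satisfies f_uu = i f_u, f_uv = -r e^{-iu} f_u + i f_v, and f_vv = r e^{-iu} f_v + i r²(e^{-2iu} - 1) f_u. -/

import Mathlib

private lemma hexp (c : ℂ) (x : ℝ) :
    HasDerivAt (fun t : ℝ => Complex.exp (c * t)) (c * Complex.exp (c * x)) x := by
  have h := (((hasDerivAt_id (x : ℂ)).const_mul c).cexp).comp_ofReal
  simpa [mul_comm] using h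

/-- Verification for Theorem 6.5 (2): f(u,v) = (A₁e^{rv}+A₂e^{-rv})e^{iu} +
(A₁e^{rv}-A₂e^{-rv}) solves the Type 2 structure equations with parameter r. -/
theorem stmt_11 (r : ℝ) (hr : 0 < r) (A₁ A₂ : ℂ × ℂ)
    (f : ℝ → ℝ → ℂ × ℂ)
    (hf : ∀ u v, f u v =
      Complex.exp (Complex.I * (u : ℂ)) •
        (Complex.exp ((r : ℂ) * (v : ℂ)) • A₁ + Complex.exp (-((r : ℂ) * (v : ℂ))) • A₂) +
      (Complex.exp ((r : ℂ) * (v : ℂ)) • A₁ - Complex.exp (-((r : ℂ) * (v : ℂ))) • A₂))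
    (fu fv : ℝ → ℝ → ℂ × ℂ)
    (hfu : ∀ u v, fu u v = deriv (fun t => f t v) u)
    (hfv : ∀ u v, fv u v = deriv (fun t => f u t) v) :
    (∀ u v, deriv (fun t => fu t v) u = Complex.I • fu u v) ∧
    (∀ u v, deriv (fun t => fu u t) v =
      -((r : ℂ) * Complex.exp (-(Complex.I * (u : ℂ)))) • fu u v + Complex.I • fv u v) ∧
    (∀ u v, deriv (fun t => fv u t) v =
      ((r : ℂ) * Complex.exp (-(Complex.I * (u : ℂ)))) • fv u v +
        (Complex.I * (r : ℂ) ^ 2 * (Complex.exp (-(2 * Complex.I * (u : ℂ))) - 1)) • fu u v) := by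
  have hneg : ∀ v : ℝ, HasDerivAt (fun t : ℝ => Complex.exp (-((r:ℂ) * t)))
      (-(r:ℂ) * Complex.exp (-((r:ℂ) * v))) v := fun v => by
    simpa [neg_mul] using hexp (-(r:ℂ)) v
  -- explicit formula for fu
  have hfu' : ∀ u v : ℝ, fu u v
      = (Complex.I * Complex.exp (Complex.I * u)) •
        (Complex.exp ((r:ℂ) * v) • A₁ + Complex.exp (-((r:ℂ) * v)) • A₂) := by
    intro u v
    rw [hfu]
    have hfun : (fun t : ℝ => f t v) = fun t : ℝ =>
        Complex.exp (Complex.I * t) •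
          (Complex.exp ((r:ℂ) * v) • A₁ + Complex.exp (-((r:ℂ) * v)) • A₂) +
        (Complex.exp ((r:ℂ) * v) • A₁ - Complex.exp (-((r:ℂ) * v)) • A₂) :=
      funext fun t => hf t v
    rw [hfun]
    exact (((hexp Complex.I u).smul_const
      (Complex.exp ((r:ℂ) * v) • A₁ + Complex.exp (-((r:ℂ) * v)) • A₂)).add_const
      (Complex.exp ((r:ℂ) * v) • A₁ - Complex.exp (-((r:ℂ) * v)) • A₂)).deriv
  -- explicit formula for fv
  have hfv' : ∀ u v : ℝ, fv u v
      = Complex.exp (Complex.I * u) •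
          (((r:ℂ) * Complex.exp ((r:ℂ) * v)) • A₁ +
            (-(r:ℂ) * Complex.exp (-((r:ℂ) * v))) • A₂) +
        (((r:ℂ) * Complex.exp ((r:ℂ) * v)) • A₁ -
          (-(r:ℂ) * Complex.exp (-((r:ℂ) * v))) • A₂) := by
    intro u v
    rw [hfv]
    have hfun : (fun t : ℝ => f u t) = fun t : ℝ =>
        Complex.exp (Complex.I * u) •
          (Complex.exp ((r:ℂ) * t) • A₁ + Complex.exp (-((r:ℂ) * t)) • A₂) +
        (Complex.exp ((r:ℂ) * t) • A₁ - Complex.exp (-((r:ℂ) * t)) • A₂) :=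
      funext fun t => hf u t
    rw [hfun]
    exact (((((hexp (r:ℂ) v).smul_const A₁).add ((hneg v).smul_const A₂)).const_smul
      (Complex.exp (Complex.I * u))).add
      (((hexp (r:ℂ) v).smul_const A₁).sub ((hneg v).smul_const A₂))).deriv
  refine ⟨?_, ?_, ?_⟩
  · intro u v
    have hfun : (fun t : ℝ => fu t v) = fun t : ℝ =>
        (Complex.I * Complex.exp (Complex.I * t)) •
          (Complex.exp ((r:ℂ) * v) • A₁ + Complex.exp (-((r:ℂ) * v)) • A₂) :=
      funext fun t => hfu' t v
    rw [hfun, (((hexp Complex.I u).const_mul Complex.I).smul_const _).deriv, hfu' u v]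
    match_scalars <;> ring
  · intro u v
    have hfun : (fun t : ℝ => fu u t) = fun t : ℝ =>
        (Complex.I * Complex.exp (Complex.I * u)) •
          (Complex.exp ((r:ℂ) * t) • A₁ + Complex.exp (-((r:ℂ) * t)) • A₂) :=
      funext fun t => hfu' u t
    erw [hfun, ((((hexp (r:ℂ) v).smul_const A₁).add ((hneg v).smul_const A₂)).const_smul
      (Complex.I * Complex.exp (Complex.I * u))).deriv, hfu' u v, hfv' u v]
    have he : Complex.exp (-(Complex.I * (u:ℂ))) = (Complex.exp (Complex.I * u))⁻¹ :=
      Complex.exp_neg _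
    rw [he]
    match_scalars <;> field_simp [Complex.exp_ne_zero, Complex.I_sq] <;> ring
  · intro u v
    have hfun : (fun t : ℝ => fv u t) = fun t : ℝ =>
        Complex.exp (Complex.I * u) •
          (((r:ℂ) * Complex.exp ((r:ℂ) * t)) • A₁ +
            (-(r:ℂ) * Complex.exp (-((r:ℂ) * t))) • A₂) +
        (((r:ℂ) * Complex.exp ((r:ℂ) * t)) • A₁ -
          (-(r:ℂ) * Complex.exp (-((r:ℂ) * t))) • A₂) :=
      funext fun t => hfv' u t
    erw [hfun, ((((((hexp (r:ℂ) v).const_mul (r:ℂ)).smul_const A₁).add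
      (((hneg v).const_mul (-(r:ℂ))).smul_const A₂)).const_smul
      (Complex.exp (Complex.I * u))).add
      ((((hexp (r:ℂ) v).const_mul (r:ℂ)).smul_const A₁).sub
        (((hneg v).const_mul (-(r:ℂ))).smul_const A₂))).deriv,
      hfu' u v, hfv' u v]
    have he : Complex.exp (-(Complex.I * (u:ℂ))) = (Complex.exp (Complex.I * u))⁻¹ :=
      Complex.exp_neg _
    have he2 : Complex.exp (-(2 * Complex.I * (u:ℂ))) = (Complex.exp (Complex.I * u))⁻¹ ^ 2 := by
      rw [show -(2 * Complex.I * (u:ℂ)) = -(Complex.I * u) + -(Complex.I * u) by ring,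
        Complex.exp_add, he]
      ring
    rw [he, he2]
    match_scalars
    · field_simp [Complex.exp_ne_zero]
      linear_combination ((Complex.exp (Complex.I * (u:ℂ))) ^ 2 - 1) * (r:ℂ) ^ 2 *
        Complex.I_sq
    · field_simp [Complex.exp_ne_zero]
      linear_combination ((Complex.exp (Complex.I * (u:ℂ))) ^ 2 - 1) * (r:ℂ) ^ 2 *
        Complex.I_sq
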